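/- Let N ≥ 2 be even and let m', y be integers with 0 ≤ m' ≤ 2N and 2y ≥ m'. Then there is a 2×2 matrix polynomial Q such that Q(w) = (w−1)^N · A(w)^{N−m'} · w^{y−N/2} for all w ∈ ℂ ∖ {0, 1} (i.e. the right-hand side has removable singularities at w = 0 and w = 1 and extends to an entire matrix-valued function). Consequently, for every positively oriented circle γ centered at 0 whose interior contains a given point s ∈ ℂ ∖ {0, 1}, one has (2πi)⁻¹ ∮_γ (w−1)^N A(w)^{N−m'} w^{y−N/2} (w−s)⁻¹ dw = (s−1)^N A(s)^{N−m'} s^{y−N/2}. -/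

import Mathlib

open Matrix

/-- The matrix symbol `A(z)` of the two-periodic Aztec diamond. -/
noncomputable def symbA (α β : ℝ) (z : ℂ) : Matrix (Fin 2) (Fin 2) ℂ :=
  (z - 1)⁻¹ • !![2 * (α : ℂ) * z, (α : ℂ) * (z + 1);
                 (β : ℂ) * z * (z + 1), 2 * (β : ℂ) * z]

open Polynomial

lemma sq_aux {R : Type*} [CommRing R] (a b c d x : R) (h : c * d = 1) :
    !![2*a*x, c*(x+1); d*x*(x+1), 2*b*x] ^ 2 =
      x • !![4*a^2*x + (x+1)^2, 2*c*(a+b)*(x+1); 2*d*(a+b)*x*(x+1), (x+1)^2 + 4*b^2*x] := by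
  rw [sq]
  ext i j
  fin_cases i <;> fin_cases j <;>
      simp [Matrix.mul_apply, Fin.sum_univ_two, Matrix.smul_apply, smul_eq_mul] <;>
    first
      | ring1
      | linear_combination (x*(x+1)^2) * h

lemma mulN_aux {R : Type*} [CommRing R] (a b x : R) (h : a * b = 1) :
    !![2*a*x, a*(x+1); b*x*(x+1), 2*b*x] * !![2*(-b)*x, a*(x+1); b*x*(x+1), 2*(-a)*x]
      = (x*(x-1)^2) • 1 := by
  ext i j
  fin_cases i <;> fin_cases j <;>
      simp [Matrix.mul_apply, Fin.sum_univ_two, Matrix.smul_apply, smul_eq_mul,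
        Matrix.one_apply] <;>
    first
      | ring1
      | linear_combination (x*(x+1)^2 - 4*x^2) * h

lemma pow_split {R : Type*} [CommRing R] {G P : Matrix (Fin 2) (Fin 2) R} {x : R}
    (h : G ^ 2 = x • P) (n : ℕ) :
    G ^ n = x ^ (n / 2) • (P ^ (n / 2) * G ^ (n % 2)) := by
  conv_lhs => rw [show n = 2 * (n / 2) + n % 2 by omega]
  rw [pow_add, pow_mul, h, _root_.smul_pow, smul_mul_assoc]

set_option maxHeartbeats 2000000 in
lemma exists_Q (α β : ℝ) (hαβ : α * β = 1) (N : ℕ) (hNeven : Even N)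
    (m' y : ℤ) (hm'0 : 0 ≤ m') (hm' : m' ≤ 2 * N) (hy : (m' : ℤ) ≤ 2 * y) :
    ∃ Q : Matrix (Fin 2) (Fin 2) (Polynomial ℂ),
      ∀ w : ℂ, w ≠ 0 → w ≠ 1 →
        (Matrix.of fun i j => (Q i j).eval w) =
          ((w - 1) ^ N * w ^ (y - (N : ℤ) / 2)) • symbA α β w ^ ((N : ℤ) - m') := by
  have hαβC : (α : ℂ) * (β : ℂ) = 1 := by exact_mod_cast congrArg (Complex.ofReal) hαβ
  obtain ⟨t, ht⟩ := hNeven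
  have htZ : (N : ℤ) = t + t := by exact_mod_cast congrArg (Nat.cast (R := ℤ)) ht
  set d : ℤ := y - (N : ℤ) / 2 with hd
  rcases le_or_gt m' (N : ℤ) with hkn | hkn
  · -- nonnegative power case
    set n : ℕ := ((N : ℤ) - m').toNat with hndef
    have hnZ : (n : ℤ) = (N : ℤ) - m' := Int.toNat_of_nonneg (by omega)
    set q : ℕ := n / 2 with hq
    set r : ℕ := n % 2 with hr
    have hnqr : n = 2 * q + r := by omega
    have hr2 : r < 2 := by omega
    have hdq : 0 ≤ d + q := by omega
    set e : ℕ := (d + q).toNat with hedef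
    have heZ : (e : ℤ) = d + q := Int.toNat_of_nonneg hdq
    have hnN : n ≤ N := by omega
    refine ⟨(((X : Polynomial ℂ) - 1) ^ (N - n) * X ^ e) •
      (!![4*(C (α:ℂ))^2*X + (X+1)^2, 2*(C (α:ℂ))*((C (α:ℂ))+(C (β:ℂ)))*(X+1);
          2*(C (β:ℂ))*((C (α:ℂ))+(C (β:ℂ)))*X*(X+1), (X+1)^2 + 4*(C (β:ℂ))^2*X] ^ q *
       !![2 * C (α:ℂ) * X, C (α:ℂ) * (X+1); C (β:ℂ) * X * (X+1), 2 * C (β:ℂ) * X] ^ r),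
      fun w hw0 hw1 => ?_⟩
    have hw1' : w - 1 ≠ 0 := sub_ne_zero.mpr hw1
    set Mw : Matrix (Fin 2) (Fin 2) ℂ :=
      !![2*(α:ℂ)*w, (α:ℂ)*(w+1); (β:ℂ)*w*(w+1), 2*(β:ℂ)*w] with hMw
    set Pw : Matrix (Fin 2) (Fin 2) ℂ :=
      !![4*(α:ℂ)^2*w + (w+1)^2, 2*(α:ℂ)*((α:ℂ)+(β:ℂ))*(w+1);
         2*(β:ℂ)*((α:ℂ)+(β:ℂ))*w*(w+1), (w+1)^2 + 4*(β:ℂ)^2*w] with hPw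
    have hsymb : symbA α β w = (w - 1)⁻¹ • Mw := rfl
    have hsq : Mw ^ 2 = w • Pw := sq_aux (α:ℂ) (β:ℂ) (α:ℂ) (β:ℂ) w hαβC
    have hpow : Mw ^ n = w ^ q • (Pw ^ q * Mw ^ r) := by
      rw [hq, hr]; exact pow_split hsq n
    have hmapM : (!![2 * C (α:ℂ) * X, C (α:ℂ) * (X+1);
        C (β:ℂ) * X * (X+1), 2 * C (β:ℂ) * X]).map (eval w) = Mw := by
      ext i j; fin_cases i <;> fin_cases j <;> simp [hMw]
    have hmapP : (!![4*(C (α:ℂ))^2*X + (X+1)^2, 2*(C (α:ℂ))*((C (α:ℂ))+(C (β:ℂ)))*(X+1);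
        2*(C (β:ℂ))*((C (α:ℂ))+(C (β:ℂ)))*X*(X+1), (X+1)^2 + 4*(C (β:ℂ))^2*X]).map
          (eval w) = Pw := by
      ext i j; fin_cases i <;> fin_cases j <;> simp [hPw]
    have hmapT : ((!![4*(C (α:ℂ))^2*X + (X+1)^2, 2*(C (α:ℂ))*((C (α:ℂ))+(C (β:ℂ)))*(X+1);
          2*(C (β:ℂ))*((C (α:ℂ))+(C (β:ℂ)))*X*(X+1), (X+1)^2 + 4*(C (β:ℂ))^2*X] ^ q *
        !![2 * C (α:ℂ) * X, C (α:ℂ) * (X+1); C (β:ℂ) * X * (X+1), 2 * C (β:ℂ) * X] ^ r)).map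
          (eval w) = Pw ^ q * Mw ^ r := by
      rw [show ∀ M : Matrix (Fin 2) (Fin 2) (Polynomial ℂ),
          M.map (eval w) = (evalRingHom w).mapMatrix M from fun _ => rfl]
      rw [_root_.map_mul, _root_.map_pow, _root_.map_pow]
      simp only [RingHom.mapMatrix_apply, coe_evalRingHom]
      rw [hmapM, hmapP]
    have hsc : ((w-1) ^ (N-n) * w ^ e : ℂ) = (w-1) ^ N * w ^ d * ((w-1)⁻¹) ^ n * w ^ q := by
      have h1 : ((w-1) : ℂ) ^ N = (w-1) ^ (N-n) * (w-1) ^ n := by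
        rw [← pow_add]; congr 1; omega
      have h2 : w ^ d = w ^ (e : ℕ) * (w ^ (q : ℕ))⁻¹ := by
        rw [← zpow_natCast w e, ← zpow_natCast w q, ← _root_.zpow_neg, ← zpow_add₀ hw0]
        congr 1; omega
      rw [h1, h2]
      simp only [inv_pow]
      field_simp
    rw [show (N : ℤ) - m' = (n : ℤ) from hnZ.symm, zpow_natCast, hsymb, _root_.smul_pow, hpow]
    have hT : ∀ i j, eval w ((!![4*(C (α:ℂ))^2*X + (X+1)^2, 2*(C (α:ℂ))*((C (α:ℂ))+(C (β:ℂ)))*(X+1);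
          2*(C (β:ℂ))*((C (α:ℂ))+(C (β:ℂ)))*X*(X+1), (X+1)^2 + 4*(C (β:ℂ))^2*X] ^ q *
        !![2 * C (α:ℂ) * X, C (α:ℂ) * (X+1); C (β:ℂ) * X * (X+1), 2 * C (β:ℂ) * X] ^ r
          : Matrix (Fin 2) (Fin 2) (Polynomial ℂ)) i j)
          = (Pw ^ q * Mw ^ r) i j := fun i j => by
      rw [← hmapT, Matrix.map_apply]
    ext i j
    simp only [Matrix.of_apply, Matrix.smul_apply, smul_eq_mul, eval_mul, eval_pow,
      eval_sub, eval_one, eval_X]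
    rw [hT i j]
    linear_combination ((Pw ^ q * Mw ^ r) i j) * hsc
  · -- negative power case
    set n : ℕ := (m' - (N : ℤ)).toNat with hndef
    have hnZ : (n : ℤ) = m' - (N : ℤ) := Int.toNat_of_nonneg (by omega)
    set q : ℕ := n / 2 with hq
    set r : ℕ := n % 2 with hr
    have hnqr : n = 2 * q + r := by omega
    have hr2 : r < 2 := by omega
    have hdq : 0 ≤ d + q - n := by omega
    set e : ℕ := (d + q - n).toNat with hedef
    have heZ : (e : ℤ) = d + q - n := Int.toNat_of_nonneg hdq
    have hnN : n ≤ N := by omega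
    refine ⟨(((X : Polynomial ℂ) - 1) ^ (N - n) * X ^ e) •
      (!![4*(-(C (β:ℂ)))^2*X + (X+1)^2, 2*(C (α:ℂ))*((-(C (β:ℂ)))+(-(C (α:ℂ))))*(X+1);
          2*(C (β:ℂ))*((-(C (β:ℂ)))+(-(C (α:ℂ))))*X*(X+1), (X+1)^2 + 4*(-(C (α:ℂ)))^2*X] ^ q *
       !![2 * (-(C (β:ℂ))) * X, C (α:ℂ) * (X+1);
          C (β:ℂ) * X * (X+1), 2 * (-(C (α:ℂ))) * X] ^ r),
      fun w hw0 hw1 => ?_⟩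
    have hw1' : w - 1 ≠ 0 := sub_ne_zero.mpr hw1
    set Mw : Matrix (Fin 2) (Fin 2) ℂ :=
      !![2*(α:ℂ)*w, (α:ℂ)*(w+1); (β:ℂ)*w*(w+1), 2*(β:ℂ)*w] with hMw
    set Nw : Matrix (Fin 2) (Fin 2) ℂ :=
      !![2*(-(β:ℂ))*w, (α:ℂ)*(w+1); (β:ℂ)*w*(w+1), 2*(-(α:ℂ))*w] with hNw
    set Pw : Matrix (Fin 2) (Fin 2) ℂ :=
      !![4*(-(β:ℂ))^2*w + (w+1)^2, 2*(α:ℂ)*((-(β:ℂ))+(-(α:ℂ)))*(w+1);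
         2*(β:ℂ)*((-(β:ℂ))+(-(α:ℂ)))*w*(w+1), (w+1)^2 + 4*(-(α:ℂ))^2*w] with hPw
    have hsymb : symbA α β w = (w - 1)⁻¹ • Mw := rfl
    have hsq : Nw ^ 2 = w • Pw := sq_aux (-(β:ℂ)) (-(α:ℂ)) (α:ℂ) (β:ℂ) w hαβC
    have hpow : Nw ^ n = w ^ q • (Pw ^ q * Nw ^ r) := by
      rw [hq, hr]; exact pow_split hsq n
    have hAinv : (symbA α β w)⁻¹ = (w * (w - 1))⁻¹ • Nw := by
      apply Matrix.inv_eq_right_inv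
      rw [hsymb, Matrix.smul_mul, Matrix.mul_smul, mulN_aux (α:ℂ) (β:ℂ) w hαβC,
        smul_smul, smul_smul]
      rw [show (w-1)⁻¹ * (w*(w-1))⁻¹ * (w*(w-1)^2) = 1 from by field_simp, one_smul]
    have hmapN : (!![2 * (-(C (β:ℂ))) * X, C (α:ℂ) * (X+1);
        C (β:ℂ) * X * (X+1), 2 * (-(C (α:ℂ))) * X]).map (eval w) = Nw := by
      ext i j; fin_cases i <;> fin_cases j <;> simp [hNw]
    have hmapP : (!![4*(-(C (β:ℂ)))^2*X + (X+1)^2, 2*(C (α:ℂ))*((-(C (β:ℂ)))+(-(C (α:ℂ))))*(X+1);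
        2*(C (β:ℂ))*((-(C (β:ℂ)))+(-(C (α:ℂ))))*X*(X+1), (X+1)^2 + 4*(-(C (α:ℂ)))^2*X]).map
          (eval w) = Pw := by
      ext i j; fin_cases i <;> fin_cases j <;> simp [hPw]
    have hmapT : ((!![4*(-(C (β:ℂ)))^2*X + (X+1)^2, 2*(C (α:ℂ))*((-(C (β:ℂ)))+(-(C (α:ℂ))))*(X+1);
          2*(C (β:ℂ))*((-(C (β:ℂ)))+(-(C (α:ℂ))))*X*(X+1), (X+1)^2 + 4*(-(C (α:ℂ)))^2*X] ^ q *
        !![2 * (-(C (β:ℂ))) * X, C (α:ℂ) * (X+1);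
          C (β:ℂ) * X * (X+1), 2 * (-(C (α:ℂ))) * X] ^ r)).map
          (eval w) = Pw ^ q * Nw ^ r := by
      rw [show ∀ M : Matrix (Fin 2) (Fin 2) (Polynomial ℂ),
          M.map (eval w) = (evalRingHom w).mapMatrix M from fun _ => rfl]
      rw [_root_.map_mul, _root_.map_pow, _root_.map_pow]
      simp only [RingHom.mapMatrix_apply, coe_evalRingHom]
      rw [hmapN, hmapP]
    have hsc : ((w-1) ^ (N-n) * w ^ e : ℂ)
        = (w-1) ^ N * w ^ d * ((w * (w-1))⁻¹) ^ n * w ^ q := by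
      rw [mul_inv, mul_pow]
      have h1 : ((w-1) : ℂ) ^ N = (w-1) ^ (N-n) * (w-1) ^ n := by
        rw [← pow_add]; congr 1; omega
      have h2 : w ^ d = w ^ (e : ℕ) * (w ^ (q : ℕ))⁻¹ * w ^ (n : ℕ) := by
        rw [← zpow_natCast w e, ← zpow_natCast w q, ← zpow_natCast w n, ← _root_.zpow_neg,
          ← zpow_add₀ hw0, ← zpow_add₀ hw0]
        congr 1; omega
      rw [h1, h2]
      simp only [inv_pow]
      field_simp
    rw [show (N : ℤ) - m' = -(n : ℤ) by omega, Matrix.zpow_neg_natCast, ← Matrix.inv_pow',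
      hAinv, _root_.smul_pow, hpow]
    have hT : ∀ i j, eval w ((!![4*(-(C (β:ℂ)))^2*X + (X+1)^2, 2*(C (α:ℂ))*((-(C (β:ℂ)))+(-(C (α:ℂ))))*(X+1);
          2*(C (β:ℂ))*((-(C (β:ℂ)))+(-(C (α:ℂ))))*X*(X+1), (X+1)^2 + 4*(-(C (α:ℂ)))^2*X] ^ q *
        !![2 * (-(C (β:ℂ))) * X, C (α:ℂ) * (X+1);
          C (β:ℂ) * X * (X+1), 2 * (-(C (α:ℂ))) * X] ^ r
          : Matrix (Fin 2) (Fin 2) (Polynomial ℂ)) i j)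
          = (Pw ^ q * Nw ^ r) i j := fun i j => by
      rw [← hmapT, Matrix.map_apply]
    ext i j
    simp only [Matrix.of_apply, Matrix.smul_apply, smul_eq_mul, eval_mul, eval_pow,
      eval_sub, eval_one, eval_X]
    rw [hT i j]
    linear_combination ((Pw ^ q * Nw ^ r) i j) * hsc

lemma ae_circleMap_ne_one (R : ℝ) (hR : R ≠ 0) :
    ∀ᵐ θ : ℝ, circleMap 0 R θ ≠ 1 := by
  have hc : {θ : ℝ | circleMap 0 R θ = 1}.Countable := by
    by_cases hne : ∃ θ₀ : ℝ, circleMap 0 R θ₀ = 1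
    · obtain ⟨θ₀, hθ₀⟩ := hne
      apply Set.Countable.mono ?_
        (Set.countable_range fun n : ℤ => θ₀ + (n : ℝ) * (2 * Real.pi))
      intro θ hθ
      have h1 : circleMap 0 R θ = circleMap 0 R θ₀ := by
        rw [Set.mem_setOf_eq] at hθ; rw [hθ, hθ₀]
      have h2 : Complex.exp (θ * Complex.I) = Complex.exp (θ₀ * Complex.I) := by
        simp only [circleMap, zero_add] at h1
        exact mul_left_cancel₀ (by exact_mod_cast hR) h1
      obtain ⟨k, hk⟩ := Complex.exp_eq_exp_iff_exists_int.mp h2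
      refine ⟨k, ?_⟩
      have hC : (θ : ℂ) * Complex.I = ((θ₀ : ℂ) + (k : ℂ) * (2 * (Real.pi : ℂ))) * Complex.I := by
        linear_combination hk
      have hC2 : (θ : ℂ) = (θ₀ : ℂ) + (k : ℂ) * (2 * (Real.pi : ℂ)) :=
        mul_right_cancel₀ Complex.I_ne_zero hC
      have : θ = θ₀ + (k : ℝ) * (2 * Real.pi) := by exact_mod_cast hC2
      rw [this]
    · push_neg at hne
      have : {θ : ℝ | circleMap 0 R θ = 1} = ∅ :=
        Set.eq_empty_iff_forall_notMem.mpr fun θ h => hne θ h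
      rw [this]; exact Set.countable_empty
  have h0 := hc.measure_zero (MeasureTheory.volume)
  rw [MeasureTheory.ae_iff]
  simpa using h0

/-- For `N ≥ 2` even and integers `0 ≤ m' ≤ 2N`, `2y ≥ m'`, the function
`w ↦ (w-1)^N A(w)^{N-m'} w^{y-N/2}` extends to a 2×2 matrix polynomial `Q`, and
consequently, by Cauchy's formula, for every circle centered at `0` whose interior
contains a point `s ∉ {0,1}`,
`(2πi)⁻¹ ∮ (w-1)^N A(w)^{N-m'} w^{y-N/2} (w-s)⁻¹ dw = (s-1)^N A(s)^{N-m'} s^{y-N/2}`. -/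
theorem residue_no_pole_at_zero_one (α β : ℝ) (hα : 0 < α) (hβ : 0 < β)
    (hαβ : α * β = 1) (N : ℕ) (hN2 : 2 ≤ N) (hNeven : Even N)
    (m' y : ℤ) (hm'0 : 0 ≤ m') (hm' : m' ≤ 2 * N) (hy : (m' : ℤ) ≤ 2 * y) :
    (∃ Q : Matrix (Fin 2) (Fin 2) (Polynomial ℂ),
      ∀ w : ℂ, w ≠ 0 → w ≠ 1 →
        (Matrix.of fun i j => (Q i j).eval w) =
          ((w - 1) ^ N * w ^ (y - (N : ℤ) / 2)) • symbA α β w ^ ((N : ℤ) - m')) ∧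
    (∀ (s : ℂ) (R : ℝ), s ≠ 0 → s ≠ 1 → ‖s‖ < R →
      (Matrix.of fun i j =>
          (2 * (Real.pi : ℂ) * Complex.I)⁻¹ *
            ∮ w in C(0, R),
              ((w - 1) ^ N * w ^ (y - (N : ℤ) / 2) * (w - s)⁻¹) *
                (symbA α β w ^ ((N : ℤ) - m')) i j) =
        ((s - 1) ^ N * s ^ (y - (N : ℤ) / 2)) • symbA α β s ^ ((N : ℤ) - m')) := by
  obtain ⟨Q, hQ⟩ := exists_Q α β hαβ N hNeven m' y hm'0 hm' hy
  refine ⟨⟨Q, hQ⟩, ?_⟩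
  intro s R hs0 hs1 hsR
  have hR : 0 < R := (norm_nonneg s).trans_lt hsR
  have hball : s ∈ Metric.ball (0 : ℂ) R := by
    simpa [Metric.mem_ball, Complex.dist_eq] using hsR
  have h2pi : (2 * (Real.pi : ℂ) * Complex.I) ≠ 0 := by
    simp [Real.pi_ne_zero, Complex.I_ne_zero, Complex.ofReal_ne_zero]
  have hent : ∀ z : ℂ, z ≠ 0 → z ≠ 1 → ∀ i j, Polynomial.eval z (Q i j) =
      ((z - 1) ^ N * z ^ (y - (N : ℤ) / 2)) * (symbA α β z ^ ((N : ℤ) - m')) i j := by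
    intro z h0 h1 i j
    have h := congrFun (congrFun (hQ z h0 h1) i) j
    simpa [Matrix.smul_apply, smul_eq_mul] using h
  ext i j
  have hint : (∮ w in C(0, R),
      ((w - 1) ^ N * w ^ (y - (N : ℤ) / 2) * (w - s)⁻¹) *
        (symbA α β w ^ ((N : ℤ) - m')) i j)
      = ∮ w in C(0, R), (w - s)⁻¹ • Polynomial.eval w (Q i j) := by
    rw [circleIntegral, circleIntegral]
    apply intervalIntegral.integral_congr_ae
    filter_upwards [ae_circleMap_ne_one R hR.ne'] with θ hθ _
    have hz0 : circleMap 0 R θ ≠ 0 := circleMap_ne_center hR.ne'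
    rw [hent _ hz0 hθ]
    simp only [smul_eq_mul]
    ring
  have hf : DiffContOnCl ℂ (fun z => Polynomial.eval z (Q i j)) (Metric.ball 0 R) :=
    ((Q i j).differentiable).diffContOnCl
  have hcau := hf.circleIntegral_sub_inv_smul hball
  simp only [Matrix.of_apply]
  rw [hint, hcau, smul_eq_mul, ← mul_assoc, inv_mul_cancel₀ h2pi, one_mul,
    hent s hs0 hs1 i j]
  simp [Matrix.smul_apply, smul_eq_mul]
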